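/- arXiv:2007.05782 — 3 statements merged into one kernel-verified Lean document; each statement's English description precedes it below -/
import Mathlib

section
/- For every even n ≥ 2, the rational number 2^{n+2}(2^{n+2}−1) B_{n+2}/(n+2) is an integer, where B_k denotes the k-th Bernoulli number. -/
open PowerSeries Finset Nat

namespace Stmt5Aux

noncomputable def E : PowerSeries ℚ := PowerSeries.exp ℚ
noncomputable def B : PowerSeries ℚ := bernoulliPowerSeries ℚ
noncomputable def F : PowerSeries ℚ := rescale 2 B - B

/-- The tanh power series. -/
noncomputable def T : PowerSeries ℚ :=
  PowerSeries.mk fun m =>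
    2 ^ (m + 1) * (2 ^ (m + 1) - 1) * bernoulli (m + 1) / (m + 1)! + (if m = 0 then 1 else 0)

lemma hC2 : (C (R := ℚ)) (2 : ℚ) = (2 : PowerSeries ℚ) := map_ofNat (C (R := ℚ)) 2

lemma hB : B * (E - 1) = X := bernoulliPowerSeries_mul_exp_sub_one ℚ

lemma hE2 : rescale 2 E = E * E := by
  have h := exp_mul_exp_eq_exp_add (1 : ℚ) 1
  norm_num [rescale_one] at h
  exact h.symm

lemma hEsub_ne : (E - 1 : PowerSeries ℚ) ≠ 0 := by
  intro h
  have := congrArg (PowerSeries.coeff (R := ℚ) 1) h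
  simp [E, PowerSeries.coeff_one] at this

lemma hrB : rescale 2 B * (E * E - 1) = 2 * X := by
  have h := congrArg (rescale (2 : ℚ)) hB
  rw [map_mul, map_sub, map_one, rescale_X, hE2, hC2] at h
  exact h

lemma hF : F * (E + 1) = -X := by
  have key : F * (E + 1) * (E - 1) = -X * (E - 1) := by
    have h1 := hB
    have h2 := hrB
    simp only [F]
    linear_combination h2 - (E + 1) * h1
  exact mul_right_cancel₀ hEsub_ne key

lemma hXT : X * T = rescale 2 F + X := by
  ext n
  cases n with
  | zero =>
    simp [F, B, bernoulliPowerSeries, map_sub, rescale_mk, constantCoeff_mk]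
  | succ n =>
    rw [PowerSeries.coeff_succ_X_mul]
    simp only [T, PowerSeries.coeff_mk, map_add, coeff_rescale, F, map_sub, B,
      bernoulliPowerSeries, PowerSeries.coeff_X, eq_ratCast, Rat.cast_id]
    rcases Nat.eq_zero_or_pos n with h | h
    · subst h
      norm_num [bernoulli_one]
    · have hn1 : ¬(n + 1 = 1) := by omega
      have hn0 : ¬(n = 0) := by omega
      simp only [hn1, hn0, if_false, if_neg]
      ring

lemma hEE1_ne : (E * E + 1 : PowerSeries ℚ) ≠ 0 := by
  intro h
  have := congrArg (PowerSeries.constantCoeff (R := ℚ)) h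
  simp [E] at this

lemma hT : T * (E * E + 1) = E * E - 1 := by
  have hrF : rescale 2 F * (E * E + 1) = 2 * (-X) := by
    have h := congrArg (rescale (2 : ℚ)) hF
    rw [map_mul, map_add, map_one, map_neg, rescale_X, hE2, hC2] at h
    rw [h]; ring
  have key : X * (T * (E * E + 1)) = X * (E * E - 1) := by
    calc X * (T * (E * E + 1)) = (X * T) * (E * E + 1) := by ring
    _ = (rescale 2 F + X) * (E * E + 1) := by rw [hXT]
    _ = rescale 2 F * (E * E + 1) + X * (E * E + 1) := by ring
    _ = 2 * (-X) + X * (E * E + 1) := by rw [hrF]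
    _ = X * (E * E - 1) := by ring
  exact mul_left_cancel₀ PowerSeries.X_ne_zero key

lemma hdE : d⁄dX ℚ E = E := by
  ext n
  rw [PowerSeries.coeff_derivative]
  simp only [E, PowerSeries.coeff_exp, eq_ratCast, Rat.cast_id, Nat.factorial_succ]
  have h1 : ((n : ℚ) + 1) ≠ 0 := by positivity
  have h2 : ((n.factorial : ℚ)) ≠ 0 := by positivity
  push_cast
  field_simp

lemma hdT : d⁄dX ℚ T = 1 - T * T := by
  have h1 := hT
  have hTE := congrArg (d⁄dX ℚ) h1
  simp only [map_sub, map_add, Derivation.leibniz, Derivation.map_one_eq_zero, hdE,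
    smul_eq_mul] at hTE
  have h2 : (E * E + 1) * d⁄dX ℚ T = 2 * (E * E) - 2 * (E * E) * T := by
    linear_combination hTE
  have key : d⁄dX ℚ T * ((E * E + 1) * (E * E + 1)) =
      (1 - T * T) * ((E * E + 1) * (E * E + 1)) := by
    linear_combination (E * E + 1) * h2 + (T * (E * E + 1) - E * E - 1) * h1
  exact mul_right_cancel₀ (mul_ne_zero hEE1_ne hEE1_ne) key

lemma hrec (m : ℕ) : (m + 1 : ℚ) * PowerSeries.coeff (R := ℚ) (m + 1) T =
    (if m = 0 then 1 else 0) - ∑ p ∈ antidiagonal m,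
      PowerSeries.coeff (R := ℚ) p.1 T * PowerSeries.coeff (R := ℚ) p.2 T := by
  have h := congrArg (PowerSeries.coeff (R := ℚ) m) hdT
  rw [PowerSeries.coeff_derivative, map_sub, PowerSeries.coeff_one, PowerSeries.coeff_mul] at h
  rw [mul_comm]
  exact h

noncomputable def IntSub : Subring ℚ := (Int.castRingHom ℚ).range

lemma int_coeff : ∀ m : ℕ, ((m ! : ℚ) * PowerSeries.coeff (R := ℚ) m T) ∈ IntSub := by
  intro m
  induction m using Nat.strong_induction_on with
  | _ m ih =>
    match m with
    | 0 =>
      have h0 : PowerSeries.coeff (R := ℚ) 0 T = 0 := by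
        simp [T, bernoulli_one]
        norm_num
      rw [h0]
      rw [mul_zero]
      exact Subring.zero_mem _
    | (m + 1) =>
      have key : (((m + 1)! : ℚ)) * PowerSeries.coeff (R := ℚ) (m + 1) T =
          (m ! : ℚ) * ((m + 1 : ℚ) * PowerSeries.coeff (R := ℚ) (m + 1) T) := by
        rw [Nat.factorial_succ]
        push_cast
        ring
      rw [key, hrec m, mul_sub, Finset.mul_sum]
      apply Subring.sub_mem
      · rcases Nat.eq_zero_or_pos m with h | h
        · subst h; simp
        · have hm : ¬(m = 0) := by omega
          simp only [hm, if_false, mul_zero]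
          exact Subring.zero_mem _
      · apply Subring.sum_mem
        intro p hp
        rw [HasAntidiagonal.mem_antidiagonal] at hp
        have hfac : (m ! : ℚ) = (m.choose p.1 : ℚ) * (p.1)! * (p.2)! := by
          have h := Nat.choose_mul_factorial_mul_factorial (le_of_add_le_left hp.le)
          rw [← hp] at h ⊢
          have h2 : p.1 + p.2 - p.1 = p.2 := by omega
          rw [h2] at h
          push_cast [← h]
          ring
        have heq : (m ! : ℚ) * (PowerSeries.coeff (R := ℚ) p.1 T * PowerSeries.coeff (R := ℚ) p.2 T) =
            (m.choose p.1 : ℚ) * (((p.1)! : ℚ) * PowerSeries.coeff (R := ℚ) p.1 T) *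
              (((p.2)! : ℚ) * PowerSeries.coeff (R := ℚ) p.2 T) := by
          rw [hfac]; ring
        rw [heq]
        have h1 : p.1 < m + 1 := by omega
        have h2 : p.2 < m + 1 := by omega
        exact Subring.mul_mem _ (Subring.mul_mem _ (natCast_mem _ _) (ih p.1 h1))
          (ih p.2 h2)

end Stmt5Aux

/-- For every even n ≥ 2, the rational number 2^{n+2}(2^{n+2}−1)B_{n+2}/(n+2) is an integer. -/
theorem stmt5 : ∀ n : ℕ, 2 ≤ n → Even n →
    ∃ m : ℤ, (2 : ℚ) ^ (n + 2) * (2 ^ (n + 2) - 1) * bernoulli (n + 2) / (n + 2) = m := by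
  intro n hn _
  have h := Stmt5Aux.int_coeff (n + 1)
  have hc : PowerSeries.coeff (R := ℚ) (n + 1) Stmt5Aux.T =
      2 ^ (n + 2) * (2 ^ (n + 2) - 1) * bernoulli (n + 2) / (n + 2)! := by
    simp only [Stmt5Aux.T, PowerSeries.coeff_mk]
    have hne : ¬(n + 1 = 0) := by omega
    simp [hne]
  rw [hc] at h
  obtain ⟨z, hz⟩ := h
  have hfac : ((n + 2)! : ℚ) = ((n : ℚ) + 2) * (n + 1)! := by
    rw [Nat.factorial_succ]; push_cast; ring
  have h1 : (((n + 1)! : ℚ)) ≠ 0 := by positivity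
  have h2 : ((n : ℚ) + 2) ≠ 0 := by positivity
  have heq : ((n + 1)! : ℚ) * (2 ^ (n + 2) * (2 ^ (n + 2) - 1) * bernoulli (n + 2) / ((n + 2)! : ℚ))
      = 2 ^ (n + 2) * (2 ^ (n + 2) - 1) * bernoulli (n + 2) / ((n : ℚ) + 2) := by
    rw [hfac]
    field_simp
  rw [heq] at hz
  exact ⟨z, by simpa using hz.symm⟩
end

section
/- Let β(z) = z + Σ_{n≥1} t_n z^{n+1}/(n+1)! be a formal power series over ℚ[t_1, t_2, ...]. For k ≥ 0 and n ≥ k, define Θ_k^{n−k} := (n+1)! · [z^{n+1}] β(z)^{k+1} (the coefficient of z^{n+1} in β(z)^{k+1}, scaled by (n+1)!). Then Θ_k^{n−k} is a polynomial in t_1,...,t_{n−k} with nonnegative integer coefficients, provided all t_j are treated as formal variables. -/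
open MvPolynomial in
private lemma stmt10_aux (β : PowerSeries (MvPolynomial ℕ ℚ))
    (hβ : β = PowerSeries.mk fun m => if m = 0 then 0 else if m = 1 then 1
      else X (m - 1) * C ((Nat.factorial m : ℚ))⁻¹) :
    ∀ k n : ℕ, ∃ p : MvPolynomial ℕ ℕ,
      (∀ i ∈ p.vars, 1 ≤ i ∧ i + (k + 1) ≤ n + 1) ∧
      (Nat.factorial (n + 1) : MvPolynomial ℕ ℚ) *
          PowerSeries.coeff (R := MvPolynomial ℕ ℚ) (n + 1) (β ^ (k + 1)) =
        MvPolynomial.map (Nat.castRingHom ℚ) p := by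
  classical
  have hc0 : (PowerSeries.coeff 0) β = 0 := by simp [hβ]
  have hc1 : (PowerSeries.coeff 1) β = 1 := by simp [hβ]
  have hcast : ∀ m : ℕ, ((m : MvPolynomial ℕ ℚ)) = C (m : ℚ) := by
    intro m; rw [MvPolynomial.C_eq_coe_nat]
  have hzero : ∀ (K b : ℕ), b < K → (PowerSeries.coeff b) (β ^ K) = 0 := by
    intro K b hb
    have hX : (PowerSeries.X : PowerSeries (MvPolynomial ℕ ℚ)) ^ K ∣ β ^ K :=
      pow_dvd_pow_of_dvd (PowerSeries.X_dvd_iff.mpr (by simpa using hc0)) K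
    exact (PowerSeries.X_pow_dvd_iff.mp hX) b hb
  have hcge : ∀ a : ℕ, 2 ≤ a →
      (PowerSeries.coeff a) β = X (a - 1) * C ((Nat.factorial a : ℚ))⁻¹ := by
    intro a ha
    have h0 : a ≠ 0 := by omega
    have h1 : a ≠ 1 := by omega
    simp [hβ, h0, h1]
  intro k
  induction k with
  | zero =>
    intro n
    rcases Nat.eq_zero_or_pos n with rfl | hn
    · exact ⟨1, by simp, by simp [hc1]⟩
    · refine ⟨X n, ?_, ?_⟩
      · intro i hi
        rw [vars_X] at hi
        simp only [Finset.mem_singleton] at hi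
        omega
      · rw [pow_one, hcge (n + 1) (by omega), map_X, hcast, Nat.add_sub_cancel,
          mul_comm (X n) (C _), ← mul_assoc, ← C_mul,
          mul_inv_cancel₀ (by exact_mod_cast Nat.factorial_ne_zero (n + 1)), C_1, one_mul]
  | succ k IH =>
    intro n
    choose q hqv hqe using IH
    set p : MvPolynomial ℕ ℕ :=
      ∑ ab ∈ Finset.HasAntidiagonal.antidiagonal (n + 1),
        if ab.2 ≤ k ∨ ab.1 = 0 then 0
        else ((n + 1).choose ab.1 : MvPolynomial ℕ ℕ) *
          (if ab.1 = 1 then 1 else X (ab.1 - 1)) * q (ab.2 - 1) with hp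
    refine ⟨p, ?_, ?_⟩
    · intro i hi
      have hi' := MvPolynomial.vars_sum_subset _ _ hi
      rw [Finset.mem_biUnion] at hi'
      obtain ⟨ab, hab, hiv⟩ := hi'
      rw [Finset.HasAntidiagonal.mem_antidiagonal] at hab
      by_cases hcond : ab.2 ≤ k ∨ ab.1 = 0
      · rw [if_pos hcond] at hiv; simp at hiv
      · rw [if_neg hcond] at hiv
        push_neg at hcond
        obtain ⟨hb, ha⟩ := hcond
        have h1 := MvPolynomial.vars_mul _ _ hiv
        rw [Finset.mem_union] at h1
        rcases h1 with h1 | h1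
        · have h2 := MvPolynomial.vars_mul _ _ h1
          rw [Finset.mem_union] at h2
          rcases h2 with h2 | h2
          · rw [← MvPolynomial.C_eq_coe_nat, MvPolynomial.vars_C] at h2
            exact absurd h2 (Finset.notMem_empty i)
          · by_cases ha1 : ab.1 = 1
            · rw [if_pos ha1] at h2
              rw [← C_1, MvPolynomial.vars_C] at h2
              exact absurd h2 (Finset.notMem_empty i)
            · rw [if_neg ha1, MvPolynomial.vars_X] at h2
              rw [Finset.mem_singleton] at h2
              subst h2
              omega
        · have h2 := hqv (ab.2 - 1) i h1
          omega
    · have hps : β ^ (k + 1 + 1) = β * β ^ (k + 1) := by rw [pow_succ']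
      rw [hps, PowerSeries.coeff_mul, Finset.mul_sum, hp, map_sum]
      refine Finset.sum_congr rfl ?_
      intro ab hab
      rw [Finset.HasAntidiagonal.mem_antidiagonal] at hab
      obtain ⟨a, b⟩ := ab
      simp only at hab ⊢
      by_cases hcond : b ≤ k ∨ a = 0
      · rw [if_pos hcond, map_zero]
        rcases hcond with hb | ha
        · rw [hzero (k + 1) b (by omega), mul_zero, mul_zero]
        · subst ha; rw [hc0, zero_mul, mul_zero]
      · rw [if_neg hcond]
        push_neg at hcond
        obtain ⟨hb, ha⟩ := hcond
        have hble : b - 1 + 1 = b := by omega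
        have hfac : (n + 1).choose a * a.factorial * b.factorial = (n + 1).factorial := by
          have := Nat.choose_mul_factorial_mul_factorial (show a ≤ n + 1 by omega)
          rwa [show n + 1 - a = b by omega] at this
        have hqe' : (Nat.factorial b : MvPolynomial ℕ ℚ) *
            PowerSeries.coeff (R := MvPolynomial ℕ ℚ) b (β ^ (k + 1)) =
            MvPolynomial.map (Nat.castRingHom ℚ) (q (b - 1)) := by
          have := hqe (b - 1)
          rwa [hble] at this
        rw [map_mul, map_mul, map_natCast]
        have hfc : ((n + 1).factorial : MvPolynomial ℕ ℚ) =
            ((n + 1).choose a : MvPolynomial ℕ ℚ) * (a.factorial : MvPolynomial ℕ ℚ) *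
              (b.factorial : MvPolynomial ℕ ℚ) := by
          rw [← hfac]; push_cast; ring
        by_cases ha1 : a = 1
        · subst ha1
          rw [if_pos rfl, map_one, hc1, one_mul, hfc]
          rw [Nat.factorial_one, Nat.cast_one, mul_one, mul_assoc, hqe']
        · rw [if_neg ha1, map_X, hcge a (by omega), hfc]
          calc ((n + 1).choose a : MvPolynomial ℕ ℚ) * (a.factorial : MvPolynomial ℕ ℚ) *
                (b.factorial : MvPolynomial ℕ ℚ) *
                (X (a - 1) * C ((a.factorial : ℚ))⁻¹ *
                  PowerSeries.coeff (R := MvPolynomial ℕ ℚ) b (β ^ (k + 1)))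
              = ((n + 1).choose a : MvPolynomial ℕ ℚ) *
                  ((a.factorial : MvPolynomial ℕ ℚ) * C ((a.factorial : ℚ))⁻¹) *
                  X (a - 1) *
                  ((b.factorial : MvPolynomial ℕ ℚ) *
                    PowerSeries.coeff (R := MvPolynomial ℕ ℚ) b (β ^ (k + 1))) := by ring
            _ = ((n + 1).choose a : MvPolynomial ℕ ℚ) * X (a - 1) *
                  MvPolynomial.map (Nat.castRingHom ℚ) (q (b - 1)) := by
                rw [hcast a.factorial, ← C_mul,
                  mul_inv_cancel₀ (by exact_mod_cast Nat.factorial_ne_zero a), C_1, mul_one, hqe']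

open MvPolynomial in
theorem stmt10 (n k : ℕ) (hkn : k ≤ n) (β : PowerSeries (MvPolynomial ℕ ℚ))
    (hβ : β = PowerSeries.mk fun m => if m = 0 then 0 else if m = 1 then 1
      else X (m - 1) * C ((Nat.factorial m : ℚ))⁻¹) :
    ∃ p : MvPolynomial ℕ ℕ,
      (∀ i ∈ p.vars, 1 ≤ i ∧ i ≤ n - k) ∧
      (Nat.factorial (n + 1) : MvPolynomial ℕ ℚ) *
          PowerSeries.coeff (R := MvPolynomial ℕ ℚ) (n + 1) (β ^ (k + 1)) =
        MvPolynomial.map (Nat.castRingHom ℚ) p := by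
  obtain ⟨p, hv, he⟩ := stmt10_aux β hβ k n
  exact ⟨p, fun i hi => by have := hv i hi; omega, he⟩
end

section
/- Define w_n ∈ ℚ[t_1,t_2,...] by the identity β(z) = z·exp(Σ_{n≥1} w_n z^n/n!) where β(z) = z + Σ_{n≥1} t_n z^{n+1}/(n+1)!. If an operator S acts on power series by S(β(z)) = β(z)² and acts as a derivation on ℚ[t_1,t_2,...][[z]] fixing z, then Σ_{n≥1} S(w_n) z^n/n! = β(z), hence S(w_n) = t_{n−1} (with t_0 := 1). -/
open MvPolynomial PowerSeries in
noncomputable abbrev Sop (d : Derivation ℚ (MvPolynomial ℕ ℚ) (MvPolynomial ℕ ℚ))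
    (f : PowerSeries (MvPolynomial ℕ ℚ)) : PowerSeries (MvPolynomial ℕ ℚ) :=
  PowerSeries.mk fun m => d (PowerSeries.coeff m f)

section aux

variable (d : Derivation ℚ (MvPolynomial ℕ ℚ) (MvPolynomial ℕ ℚ))
    (f g : PowerSeries (MvPolynomial ℕ ℚ))

lemma Sop_add : Sop d (f + g) = Sop d f + Sop d g := by
  apply PowerSeries.ext; intro n
  simp

lemma Sop_mul : Sop d (f * g) = Sop d f * g + f * Sop d g := by
  apply PowerSeries.ext; intro n
  simp only [Sop, PowerSeries.coeff_mk, PowerSeries.coeff_mul, map_sum, map_add,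
    Derivation.leibniz, smul_eq_mul]
  rw [← Finset.sum_add_distrib]
  exact Finset.sum_congr rfl fun x _ => by ring

lemma Sop_deriv :
    Sop d (PowerSeries.derivative (MvPolynomial ℕ ℚ) f)
      = PowerSeries.derivative (MvPolynomial ℕ ℚ) (Sop d f) := by
  apply PowerSeries.ext; intro n
  simp [PowerSeries.coeff_derivative, Derivation.leibniz, Derivation.map_natCast]
  ring

lemma Sop_X : Sop d PowerSeries.X = 0 := by
  apply PowerSeries.ext; intro n
  simp only [Sop, PowerSeries.coeff_mk, PowerSeries.coeff_X]
  split <;> simp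

lemma PS_X_mul_cancel {f g : PowerSeries (MvPolynomial ℕ ℚ)}
    (h : PowerSeries.X * f = PowerSeries.X * g) : f = g := by
  apply PowerSeries.ext; intro n
  have := congrArg (PowerSeries.coeff (n + 1)) h
  simpa [PowerSeries.coeff_succ_X_mul] using this

end aux

open MvPolynomial in
/-- Define w_n by β(z) = z·exp(Σ_{n≥1} w_n z^n/n!) (encoded by the equivalent
differential identity z·β'(z) = β(z) + z·W'(z)·β(z), where W = Σ w_n z^n/n!), where
β(z) = z + Σ_{n≥1} t_n z^{n+1}/(n+1)!. If S acts coefficientwise on power series through a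
ℚ-derivation d of ℚ[t_1,t_2,...] and S(β) = β², then Σ_{n≥1} S(w_n) z^n/n! = β(z),
hence S(w_n) = t_{n−1} (with t_0 := 1). -/
theorem stmt14 (d : Derivation ℚ (MvPolynomial ℕ ℚ) (MvPolynomial ℕ ℚ))
    (β W : PowerSeries (MvPolynomial ℕ ℚ)) (w : ℕ → MvPolynomial ℕ ℚ)
    (hβ : β = PowerSeries.mk fun m => if m = 0 then 0 else if m = 1 then 1
      else X (m - 1) * C ((Nat.factorial m : ℚ))⁻¹)
    (hW : W = PowerSeries.mk fun m => if m = 0 then 0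
      else w m * C ((Nat.factorial m : ℚ))⁻¹)
    (hexp : PowerSeries.X * PowerSeries.derivative (MvPolynomial ℕ ℚ) β =
      β + PowerSeries.X * PowerSeries.derivative (MvPolynomial ℕ ℚ) W * β)
    (hS : (PowerSeries.mk fun m => d (PowerSeries.coeff m β)) = β ^ 2)
    (t : ℕ → MvPolynomial ℕ ℚ) (ht : ∀ j, t j = if j = 0 then 1 else X j) :
    (PowerSeries.mk fun m => if m = 0 then 0
        else d (w m) * C ((Nat.factorial m : ℚ))⁻¹) = β ∧
    ∀ n, 1 ≤ n → d (w n) = t (n - 1) := by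
  have hSβ : Sop d β = β ^ 2 := hS
  -- d of constants is zero
  have hdC : ∀ q : ℚ, d (C q) = 0 := fun q => by
    rw [show (C q : MvPolynomial ℕ ℚ) = algebraMap ℚ (MvPolynomial ℕ ℚ) q from rfl]
    exact Derivation.map_algebraMap d q
  -- apply Sop to hexp
  have E1 := congrArg (Sop d) hexp
  rw [Sop_mul, Sop_X, Sop_add, Sop_mul, Sop_mul, Sop_X, Sop_deriv, Sop_deriv, hSβ] at E1
  -- key cancellation equation
  have key : (PowerSeries.X * β) * (PowerSeries.derivative (MvPolynomial ℕ ℚ) (Sop d W))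
      = (PowerSeries.X * β) * (PowerSeries.derivative (MvPolynomial ℕ ℚ) β) := by
    have h2 : PowerSeries.derivative (MvPolynomial ℕ ℚ) (β ^ 2)
        = 2 * β * PowerSeries.derivative (MvPolynomial ℕ ℚ) β := by
      rw [pow_two, Derivation.leibniz, smul_eq_mul]
      ring
    rw [h2] at E1
    linear_combination (-1 : PowerSeries (MvPolynomial ℕ ℚ)) * E1 + β * hexp
  -- β = X * g with g a unit
  have hβ0 : PowerSeries.constantCoeff β = 0 := by simp [hβ]
  obtain ⟨g, hg⟩ := (PowerSeries.X_dvd_iff).mpr hβ0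
  have hg0 : PowerSeries.constantCoeff g = 1 := by
    have := congrArg (PowerSeries.coeff 1) hg
    simp [hβ, PowerSeries.coeff_succ_X_mul] at this
    simpa [PowerSeries.coeff_zero_eq_constantCoeff] using this.symm
  have hgu : IsUnit g := PowerSeries.isUnit_iff_constantCoeff.mpr (by simp [hg0])
  obtain ⟨u, hu⟩ := hgu
  -- cancel X * β
  have key2 : PowerSeries.derivative (MvPolynomial ℕ ℚ) (Sop d W) = PowerSeries.derivative (MvPolynomial ℕ ℚ) β := by
    set A := PowerSeries.derivative (MvPolynomial ℕ ℚ) (Sop d W) with hA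
    set B := PowerSeries.derivative (MvPolynomial ℕ ℚ) β with hB
    rw [hg] at key
    have k1 : PowerSeries.X * (PowerSeries.X * (g * A))
        = PowerSeries.X * (PowerSeries.X * (g * B)) := by
      linear_combination key
    have k2 := PS_X_mul_cancel (PS_X_mul_cancel k1)
    have k3 := congrArg (fun x => (↑u⁻¹ : PowerSeries (MvPolynomial ℕ ℚ)) * x) k2
    simpa [← hu, ← mul_assoc, Units.inv_mul] using k3
  have hW0 : PowerSeries.constantCoeff (Sop d W) = 0 := by
    simp [Sop, hW, PowerSeries.constantCoeff_mk]
  have main : Sop d W = β :=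
    PowerSeries.derivative.ext key2 (by rw [hW0, hβ0])
  -- identify Sop d W with the goal series
  have hser : (PowerSeries.mk fun m => if m = 0 then 0
      else d (w m) * C ((Nat.factorial m : ℚ))⁻¹) = Sop d W := by
    apply PowerSeries.ext; intro n
    simp only [Sop, PowerSeries.coeff_mk, hW]
    split
    · simp
    · rw [Derivation.leibniz, hdC, smul_eq_mul, smul_eq_mul]
      ring
  refine ⟨hser.trans main, fun n hn => ?_⟩
  have hc := congrArg (PowerSeries.coeff n) (hser.trans main)
  rw [hβ] at hc
  simp only [PowerSeries.coeff_mk] at hc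
  rcases eq_or_lt_of_le hn with h1 | h2
  · subst h1
    rw [if_neg (by omega), if_pos rfl] at hc
    rw [ht, if_pos (by omega)]
    simpa [Nat.factorial] using hc
  · rw [if_neg (by omega), if_neg (by omega), if_neg (by omega)] at hc
    rw [ht, if_neg (by omega)]
    have hf : (C ((Nat.factorial n : ℚ))⁻¹ : MvPolynomial ℕ ℚ) * C ((Nat.factorial n : ℚ)) = 1 := by
      rw [← C_mul, inv_mul_cancel₀ (by exact_mod_cast n.factorial_ne_zero)]
      simp
    calc d (w n) = d (w n) * (C ((Nat.factorial n : ℚ))⁻¹ * C ((Nat.factorial n : ℚ))) := by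
          rw [hf, mul_one]
      _ = (d (w n) * C ((Nat.factorial n : ℚ))⁻¹) * C ((Nat.factorial n : ℚ)) := by ring
      _ = (X (n - 1) * C ((Nat.factorial n : ℚ))⁻¹) * C ((Nat.factorial n : ℚ)) := by rw [hc]
      _ = X (n - 1) := by rw [mul_assoc, hf, mul_one]
end
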